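/- In the setting of the second-moment lemma, E[X_H(G)] → ∞ as n → ∞ whenever p = n^{δ−1}, m = n^ρ, 2 < α < min(2/(1−δ),3), and 0 < ρ < min((1−δ)/2, (2−α(1−δ))/4); indeed E[X_H(G)] ≥ (1−ε) n^{mρ}. -/

import Mathlib

open scoped Classical
open Finset

noncomputable section

/-- An edge configuration on `n` vertices: a boolean for each unordered pair. -/
abbrev EdgeConfig (n : ℕ) := Sym2 (Fin n) → Bool

/-- The simple graph determined by an edge configuration. -/
def toGraph {n : ℕ} (g : EdgeConfig n) : SimpleGraph (Fin n) :=
  SimpleGraph.fromRel (fun u v => g s(u, v) = true)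

/-- The `G(n,p)` probability weight of a single edge configuration. -/
def gnpWeight (n : ℕ) (p : ℝ) (g : EdgeConfig n) : ℝ :=
  ∏ e ∈ Finset.univ.filter (fun e : Sym2 (Fin n) => ¬ e.IsDiag),
    (if g e then p else 1 - p)

/-- The probability of an event under the Erdős–Rényi model `G(n,p)`. -/
def gnpProb (n : ℕ) (p : ℝ) (A : Set (EdgeConfig n)) : ℝ :=
  ∑ g : EdgeConfig n, if g ∈ A then gnpWeight n p g else 0

/-- The graph obtained from configuration `g` by turning the vertex set `K` into
a clique (the planted clique model). -/
def plantClique {n : ℕ} (g : EdgeConfig n) (K : Finset (Fin n)) : SimpleGraph (Fin n) :=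
  SimpleGraph.fromRel (fun u v => g s(u, v) = true ∨ (u ∈ K ∧ v ∈ K))

end

noncomputable section

/-- `f : Fin m → Fin n` obeys the partition of `[n]` into `m` consecutive parts of
size `n/m` if `f i` lies in the `i`-th part for every `i`. -/
def PartRespecting (n m : ℕ) (f : Fin m → Fin n) : Prop :=
  ∀ i : Fin m, (f i).val / (n / m) = i.val

/-- The number of partition-respecting induced copies of `H` in `G`. -/
def copyCount (n m : ℕ) (H : SimpleGraph (Fin m)) (G : SimpleGraph (Fin n)) : ℕ :=
  ((Finset.univ : Finset (Fin m → Fin n)).filter (fun f =>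
    PartRespecting n m f ∧
      ∀ i j : Fin m, i ≠ j → (G.Adj (f i) (f j) ↔ H.Adj i j))).card

/-- The expected number of partition-respecting induced copies of `H` under `G(n,p)`. -/
def expCopies (n m : ℕ) (p : ℝ) (H : SimpleGraph (Fin m)) : ℝ :=
  ∑ g : EdgeConfig n, gnpWeight n p g * (copyCount n m H (toGraph g) : ℝ)

end

lemma sum_prod_bool {ι : Type*} [DecidableEq ι] [Fintype ι] (G : ι → Bool → ℝ) :
    ∑ g : ι → Bool, ∏ e, G e (g e) = ∏ e, (G e true + G e false) := by
  classical
  have : ∀ e : ι, G e true + G e false = ∑ b : Bool, G e b := by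
    intro e; simp [Fintype.sum_bool]
  simp_rw [this]
  rw [Finset.prod_univ_sum (fun _ => (univ : Finset Bool)) G, Fintype.piFinset_univ]

lemma div_eq_iff_aux {q i x : ℕ} (hq : 0 < q) : x / q = i ↔ i * q ≤ x ∧ x < (i + 1) * q := by
  constructor
  · rintro rfl
    exact ⟨by rw [Nat.mul_comm]; exact Nat.mul_div_le x q,
      (Nat.div_lt_iff_lt_mul hq).1 (Nat.lt_succ_self _)⟩
  · rintro ⟨h1, h2⟩
    exact le_antisymm (Nat.lt_succ_iff.1 ((Nat.div_lt_iff_lt_mul hq).2 h2))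
      ((Nat.le_div_iff_mul_le hq).2 h1)

lemma part_card (n m q : ℕ) (hq : q = n / m) (hmn : m ∣ n) (hm : 0 < m) (hn : 0 < n)
    (i : Fin m) :
    ((univ : Finset (Fin n)).filter (fun x : Fin n => (x : ℕ) / q = (i : ℕ))).card = q := by
  have hq0 : 0 < q := by
    subst hq
    exact Nat.div_pos (Nat.le_of_dvd hn hmn) hm
  have hn' : n = m * q := by subst hq; exact (Nat.mul_div_cancel' hmn).symm
  have hle : ((i : ℕ) + 1) * q ≤ n := by
    rw [hn', Nat.mul_comm m q, Nat.mul_comm _ q]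
    exact Nat.mul_le_mul_left q i.2
  have h2 : ((univ : Finset (Fin n)).filter (fun x : Fin n => (x : ℕ) / q = (i : ℕ))).card =
      ((Finset.range n).filter (fun x => x / q = (i : ℕ))).card := by
    rw [Finset.card_filter, Finset.card_filter,
      ← Fin.sum_univ_eq_sum_range (fun x => if x / q = (i : ℕ) then 1 else 0)]
  rw [h2]
  have : (Finset.range n).filter (fun x => x / q = (i : ℕ)) =
      Finset.Ico ((i : ℕ) * q) (((i : ℕ) + 1) * q) := by
    ext x
    simp only [mem_filter, Finset.mem_range, Finset.mem_Ico, div_eq_iff_aux hq0]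
    constructor
    · rintro ⟨_, h⟩; exact h
    · rintro ⟨h1, h2⟩; exact ⟨lt_of_lt_of_le h2 hle, h1, h2⟩
  rw [this, Nat.card_Ico]
  ring_nf
  omega

lemma pr_card (n m : ℕ) (hmn : m ∣ n) (hm : 0 < m) (hn : 0 < n) :
    ((univ : Finset (Fin m → Fin n)).filter (PartRespecting n m)).card = (n / m) ^ m := by
  classical
  set q := n / m with hq
  have : (univ : Finset (Fin m → Fin n)).filter (PartRespecting n m) =
      Fintype.piFinset (fun i : Fin m =>
        (univ : Finset (Fin n)).filter (fun x : Fin n => (x : ℕ) / q = (i : ℕ))) := by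
    ext f
    simp [Fintype.mem_piFinset, PartRespecting, hq]
  rw [this, Fintype.card_piFinset]
  calc ∏ i : Fin m, ((univ : Finset (Fin n)).filter
        (fun x : Fin n => (x : ℕ) / q = (i : ℕ))).card
      = ∏ _i : Fin m, q := Finset.prod_congr rfl (fun i _ => part_card n m q rfl hmn hm hn i)
    _ = q ^ m := by simp

lemma key_bound (n m : ℕ) (p : ℝ) (hp0 : 0 ≤ p) (hp1 : p ≤ 1)
    (H : SimpleGraph (Fin m)) (f : Fin m → Fin n) (hf : Function.Injective f) :
    p ^ H.edgeFinset.card * (1 - p) ^ (Nat.choose m 2 - H.edgeFinset.card) ≤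
    ∑ g : EdgeConfig n,
      if (∀ i j : Fin m, i ≠ j → ((toGraph g).Adj (f i) (f j) ↔ H.Adj i j))
      then gnpWeight n p g else 0 := by
  classical
  set NDm : Finset (Sym2 (Fin m)) := univ.filter (fun a => ¬ a.IsDiag) with hNDm
  set S : Finset (Sym2 (Fin n)) := NDm.image (Sym2.map f) with hS
  set t : Sym2 (Fin n) → Bool := fun e => decide (∃ a ∈ H.edgeFinset, Sym2.map f a = e)
    with ht
  set w : Bool → ℝ := fun b => if b then p else 1 - p with hw
  set G : Sym2 (Fin n) → Bool → ℝ := fun e b =>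
    if e.IsDiag then (if b then 0 else 1)
    else if e ∈ S then (if b = t e then w b else 0) else w b with hG
  have hmapinj : Function.Injective (Sym2.map f) := Sym2.map.injective hf
  have hSnd : ∀ e ∈ S, ¬ e.IsDiag := by
    intro e he
    simp only [hS, mem_image, hNDm, mem_filter, mem_univ, true_and] at he
    obtain ⟨a, ha, rfl⟩ := he
    rwa [Sym2.isDiag_map hf]
  -- t on image
  have htmap : ∀ a : Sym2 (Fin m), (t (Sym2.map f a) = true) ↔ a ∈ H.edgeFinset := by
    intro a
    simp only [ht, decide_eq_true_eq]
    constructor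
    · rintro ⟨a', ha', h⟩; rwa [← hmapinj h]
    · intro ha; exact ⟨a, ha, rfl⟩
  -- event equivalence
  have hevent : ∀ g : EdgeConfig n,
      (∀ i j : Fin m, i ≠ j → ((toGraph g).Adj (f i) (f j) ↔ H.Adj i j)) ↔
      (∀ e ∈ S, g e = t e) := by
    intro g
    constructor
    · intro hyp e he
      simp only [hS, mem_image, hNDm, mem_filter, mem_univ, true_and] at he
      obtain ⟨a, ha, rfl⟩ := he
      induction a using Sym2.ind with
      | _ i j =>
        have hij : i ≠ j := by simpa [Sym2.mk_isDiag_iff] using ha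
        have h1 := hyp i j hij
        have h2 : (toGraph g).Adj (f i) (f j) ↔ g s(f i, f j) = true := by
          simp only [toGraph, SimpleGraph.fromRel_adj]
          constructor
          · rintro ⟨-, h | h⟩
            · exact h
            · rwa [Sym2.eq_swap] at h
          · intro h; exact ⟨hf.ne hij, Or.inl h⟩
        have h3 : (t (Sym2.map f s(i, j)) = true) ↔ H.Adj i j := by
          rw [htmap]; simp [SimpleGraph.mem_edgeFinset]
        have : g (Sym2.map f s(i, j)) = true ↔ t (Sym2.map f s(i, j)) = true := by
          rw [h3, Sym2.map_pair_eq, ← h2, ← h1]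
        exact Bool.coe_iff_coe.mp this
    · intro hyp i j hij
      have ha : s(i, j) ∈ NDm := by simp [hNDm, Sym2.mk_isDiag_iff, hij]
      have he : Sym2.map f s(i, j) ∈ S := mem_image_of_mem _ ha
      have hge := hyp _ he
      have h3 : (t (Sym2.map f s(i, j)) = true) ↔ H.Adj i j := by
        rw [htmap]; simp [SimpleGraph.mem_edgeFinset]
      have h2 : (toGraph g).Adj (f i) (f j) ↔ g s(f i, f j) = true := by
        simp only [toGraph, SimpleGraph.fromRel_adj]
        constructor
        · rintro ⟨-, h | h⟩
          · exact h
          · rwa [Sym2.eq_swap] at h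
        · intro h; exact ⟨hf.ne hij, Or.inl h⟩
      rw [h2, ← h3, ← Sym2.map_pair_eq, hge]
  -- termwise bound
  have hterm : ∀ g : EdgeConfig n, ∏ e, G e (g e) ≤
      (if (∀ i j : Fin m, i ≠ j → ((toGraph g).Adj (f i) (f j) ↔ H.Adj i j))
       then gnpWeight n p g else 0) := by
    intro g
    by_cases hc : ∀ e ∈ S, g e = t e
    · rw [if_pos ((hevent g).mpr hc)]
      have hGle : ∀ e : Sym2 (Fin n), G e (g e) ≤ (if e.IsDiag then 1 else w (g e)) := by
        intro e
        by_cases hd : e.IsDiag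
        · simp only [hG, if_pos hd]; split <;> norm_num
        · simp only [hG, if_neg hd]
          by_cases heS : e ∈ S
          · rw [if_pos heS, if_pos (hc e heS)]
          · rw [if_neg heS]
      have hGnn : ∀ e : Sym2 (Fin n), 0 ≤ G e (g e) := by
        intro e
        simp only [hG, hw]
        split_ifs <;> linarith
      calc ∏ e, G e (g e) ≤ ∏ e, (if e.IsDiag then 1 else w (g e)) :=
            Finset.prod_le_prod (fun e _ => hGnn e) (fun e _ => hGle e)
        _ = gnpWeight n p g := by
            rw [Finset.prod_ite (fun _ => (1 : ℝ)) (fun e => w (g e)),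
              Finset.prod_const_one, one_mul, gnpWeight]
    · rw [if_neg (fun h => hc ((hevent g).mp h))]
      push_neg at hc
      obtain ⟨e0, he0S, he0⟩ := hc
      refine le_of_eq (Finset.prod_eq_zero (Finset.mem_univ e0) ?_)
      simp only [hG, if_neg (hSnd e0 he0S), if_pos he0S, if_neg he0]
  -- assemble
  have hsum : ∑ g : EdgeConfig n, ∏ e, G e (g e) ≤
      ∑ g : EdgeConfig n,
        (if (∀ i j : Fin m, i ≠ j → ((toGraph g).Adj (f i) (f j) ↔ H.Adj i j))
         then gnpWeight n p g else 0) :=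
    Finset.sum_le_sum (fun g _ => hterm g)
  refine le_trans (le_of_eq ?_) hsum
  rw [sum_prod_bool G]
  have hfact : ∀ e : Sym2 (Fin n), G e true + G e false = if e ∈ S then w (t e) else 1 := by
    intro e
    by_cases hd : e.IsDiag
    · have heS : e ∉ S := fun h => hSnd e h hd
      simp [hG, hd, heS]
    · by_cases heS : e ∈ S
      · cases htE : t e <;> simp [hG, hd, heS, htE]
      · simp only [hG, if_neg hd, if_neg heS, hw]
        norm_num
  simp_rw [hfact]
  rw [Finset.prod_ite_mem, Finset.univ_inter, hS,
    Finset.prod_image (fun a _ b _ h => hmapinj h)]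
  have hcongr : ∀ a ∈ NDm, w (t (Sym2.map f a)) =
      (if a ∈ H.edgeFinset then p else 1 - p) := by
    intro a _
    by_cases ha : a ∈ H.edgeFinset
    · rw [if_pos ha]
      have : t (Sym2.map f a) = true := (htmap a).mpr ha
      simp [this, hw]
    · rw [if_neg ha]
      have : t (Sym2.map f a) = false := by
        cases hb : t (Sym2.map f a)
        · rfl
        · exact absurd ((htmap a).mp hb) ha
      simp [this, hw]
  rw [Finset.prod_congr rfl hcongr,
    Finset.prod_ite (fun _ => p) (fun _ => 1 - p),
    Finset.prod_const, Finset.prod_const]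
  have hfe : NDm.filter (fun a => a ∈ H.edgeFinset) = H.edgeFinset := by
    ext a
    simp only [hNDm, Finset.filter_filter, Finset.mem_filter, Finset.mem_univ, true_and]
    exact ⟨fun h => h.2, fun h => ⟨H.not_isDiag_of_mem_edgeSet (SimpleGraph.mem_edgeFinset.mp h), h⟩⟩
  have hcard : (NDm.filter (fun a => a ∈ H.edgeFinset)).card +
      (NDm.filter (fun a => ¬ a ∈ H.edgeFinset)).card = NDm.card :=
    Finset.card_filter_add_card_filter_not _
  have hNDcard : NDm.card = Nat.choose m 2 := by
    rw [hNDm, ← Fintype.card_subtype, Sym2.card_subtype_not_diag, Fintype.card_fin]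
  rw [hfe] at hcard ⊢
  have : (NDm.filter (fun a => ¬ a ∈ H.edgeFinset)).card =
      Nat.choose m 2 - H.edgeFinset.card := by omega
  rw [this]

lemma pr_injective {n m : ℕ} {f : Fin m → Fin n} (hf : PartRespecting n m f) :
    Function.Injective f := by
  intro i j h
  have := hf i
  rw [h, hf j] at this
  exact (Fin.ext this).symm

lemma expCopies_lower (n m : ℕ) (p : ℝ) (hp0 : 0 ≤ p) (hp1 : p ≤ 1)
    (hmn : m ∣ n) (hm : 0 < m) (hn : 0 < n) (H : SimpleGraph (Fin m)) :
    ((n / m : ℕ) : ℝ) ^ m *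
      (p ^ H.edgeFinset.card * (1 - p) ^ (Nat.choose m 2 - H.edgeFinset.card)) ≤
    expCopies n m p H := by
  classical
  set Q : (Fin m → Fin n) → EdgeConfig n → Prop := fun f g =>
    ∀ i j : Fin m, i ≠ j → ((toGraph g).Adj (f i) (f j) ↔ H.Adj i j) with hQ
  have hswap : expCopies n m p H =
      ∑ f : Fin m → Fin n, ∑ g : EdgeConfig n,
        if PartRespecting n m f ∧ Q f g then gnpWeight n p g else 0 := by
    rw [expCopies, Finset.sum_comm]
    refine Finset.sum_congr rfl (fun g _ => ?_)
    rw [copyCount, Finset.card_filter]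
    push_cast
    rw [Finset.mul_sum]
    refine Finset.sum_congr rfl (fun f _ => ?_)
    by_cases h : PartRespecting n m f ∧ Q f g <;> simp [h, hQ]
  rw [hswap]
  have hsplit : ∀ f : Fin m → Fin n,
      (∑ g : EdgeConfig n, if PartRespecting n m f ∧ Q f g then gnpWeight n p g else 0) =
      if PartRespecting n m f then
        (∑ g : EdgeConfig n, if Q f g then gnpWeight n p g else 0) else 0 := by
    intro f
    by_cases hP : PartRespecting n m f
    · rw [if_pos hP]
      refine Finset.sum_congr rfl (fun g _ => ?_)
      by_cases h : Q f g <;> simp [h, hP]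
    · rw [if_neg hP]
      refine Finset.sum_eq_zero (fun g _ => ?_)
      simp [hP]
  simp_rw [hsplit]
  rw [← Finset.sum_filter]
  have hB : ∀ f ∈ (univ : Finset (Fin m → Fin n)).filter (PartRespecting n m),
      p ^ H.edgeFinset.card * (1 - p) ^ (Nat.choose m 2 - H.edgeFinset.card) ≤
      ∑ g : EdgeConfig n, if Q f g then gnpWeight n p g else 0 := by
    intro f hfmem
    have hP : PartRespecting n m f := (Finset.mem_filter.mp hfmem).2
    exact key_bound n m p hp0 hp1 H f (pr_injective hP)
  have := Finset.card_nsmul_le_sum _ _ _ hB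
  rw [pr_card n m hmn hm hn, nsmul_eq_mul] at this
  calc ((n / m : ℕ) : ℝ) ^ m *
      (p ^ H.edgeFinset.card * (1 - p) ^ (Nat.choose m 2 - H.edgeFinset.card))
      = ((n / m) ^ m : ℕ) *
        (p ^ H.edgeFinset.card * (1 - p) ^ (Nat.choose m 2 - H.edgeFinset.card)) := by
        push_cast; ring
    _ ≤ _ := this

/-- The expected number of partition-respecting induced copies of a balanced graph
`H` on `m = n^ρ` vertices with average degree `α` in `G(n,p)`, `p = n^{δ-1}`,
satisfies `E[X_H] ≥ (1-ε)·n^{mρ}` (hence it tends to infinity), whenever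
`2 < α < min(2/(1-δ), 3)` and `0 < ρ < min((1-δ)/2, (2-α(1-δ))/4)`. -/
theorem expCopies_tendsto_infinity (δ ρ α ε : ℝ) (hδ : δ ∈ Set.Ioo (0:ℝ) 1)
    (hε : ε ∈ Set.Ioo (0:ℝ) (1/7))
    (hα : 2 < α ∧ α < min (2 / (1 - δ)) 3)
    (hρ : 0 < ρ ∧ ρ < min ((1 - δ) / 2) ((2 - α * (1 - δ)) / 4)) :
    ∀ᶠ n : ℕ in Filter.atTop, ∀ m : ℕ, (m : ℝ) = (n : ℝ) ^ ρ → m ∣ n →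
      ∀ H : SimpleGraph (Fin m),
        2 * (H.edgeFinset.card : ℝ) = α * m →
        (∀ s : Finset (Fin m),
          2 * ((H.edgeFinset.filter (fun e => ∀ v ∈ e, v ∈ s)).card : ℝ) ≤ α * s.card) →
        (1 - ε) * (n : ℝ) ^ ((m : ℝ) * ρ) ≤ expCopies n m ((n : ℝ) ^ (δ - 1)) H := by
  obtain ⟨hδ0, hδ1⟩ := hδ
  obtain ⟨hε0, hε1⟩ := hε
  have hρ2 : ρ < (1 - δ) / 2 := lt_of_lt_of_le hρ.2 (min_le_left _ _)
  have hρ4 : ρ < (2 - α * (1 - δ)) / 4 := lt_of_lt_of_le hρ.2 (min_le_right _ _)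
  have hexpneg : 2 * ρ + δ - 1 < 0 := by linarith
  have htend : Filter.Tendsto (fun n : ℕ => (n : ℝ) ^ (2 * ρ + δ - 1))
      Filter.atTop (nhds 0) := by
    have h := (tendsto_rpow_neg_atTop (by linarith : (0:ℝ) < 1 - δ - 2 * ρ)).comp
      (tendsto_natCast_atTop_atTop (R := ℝ))
    have hee : 2 * ρ + δ - 1 = -(1 - δ - 2 * ρ) := by ring
    rw [hee]
    exact h
  have hev : ∀ᶠ n : ℕ in Filter.atTop, (n : ℝ) ^ (2 * ρ + δ - 1) < ε :=
    htend.eventually_lt_const hε0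
  filter_upwards [Filter.eventually_ge_atTop 2, hev] with n hn2 hsmall
  intro m hmρ hdvd H hdeg _hbal
  set p : ℝ := (n : ℝ) ^ (δ - 1) with hp
  set E : ℕ := H.edgeFinset.card with hEdef
  set C : ℕ := Nat.choose m 2 with hCdef
  have hn0 : 0 < n := by omega
  have hnR0 : (0 : ℝ) < n := by exact_mod_cast hn0
  have hn1 : (1 : ℝ) ≤ n := by exact_mod_cast Nat.one_le_of_lt hn2
  have hm0 : 0 < m := by
    have : (0 : ℝ) < m := hmρ ▸ Real.rpow_pos_of_pos hnR0 ρ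
    exact_mod_cast this
  have hp0 : 0 ≤ p := Real.rpow_nonneg hnR0.le _
  have hp1 : p ≤ 1 := Real.rpow_le_one_of_one_le_of_nonpos hn1 (by linarith)
  have key := expCopies_lower n m p hp0 hp1 hdvd hm0 hn0 H
  -- rewrite (n/m)^m * p^E as a single rpow
  have hq : ((n / m : ℕ) : ℝ) = (n : ℝ) ^ (1 - ρ) := by
    rw [Nat.cast_div hdvd (by exact_mod_cast hm0.ne'), hmρ,
      Real.rpow_sub hnR0, Real.rpow_one]
  have hA : ((n / m : ℕ) : ℝ) ^ m = (n : ℝ) ^ ((1 - ρ) * m) := by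
    rw [hq, ← Real.rpow_natCast ((n : ℝ) ^ (1 - ρ)) m, ← Real.rpow_mul hnR0.le]
  have hB : p ^ E = (n : ℝ) ^ ((δ - 1) * E) := by
    rw [hp, ← Real.rpow_natCast ((n : ℝ) ^ (δ - 1)) E, ← Real.rpow_mul hnR0.le]
  have hAB : ((n / m : ℕ) : ℝ) ^ m * p ^ E = (n : ℝ) ^ ((1 - ρ) * m + (δ - 1) * E) := by
    rw [hA, hB, Real.rpow_add hnR0]
  -- exponent comparison
  have hE : (E : ℝ) = α * m / 2 := by linarith
  have hmnn : (0 : ℝ) ≤ m := Nat.cast_nonneg m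
  have hexp : (m : ℝ) * ρ ≤ (1 - ρ) * m + (δ - 1) * E := by
    rw [hE]
    nlinarith [hmnn, hρ4]
  have hA2 : (n : ℝ) ^ ((m : ℝ) * ρ) ≤ ((n / m : ℕ) : ℝ) ^ m * p ^ E := by
    rw [hAB]
    exact Real.rpow_le_rpow_of_exponent_le hn1 hexp
  -- (1-p)^(C-E) ≥ 1 - ε
  have hCp : (C : ℝ) * p ≤ ε := by
    have hCle : (C : ℝ) ≤ (m : ℝ) * m := by
      have h1 : C ≤ m * m := by
        rw [hCdef, Nat.choose_two_right]
        exact le_trans (Nat.div_le_self _ _) (Nat.mul_le_mul_left m (Nat.sub_le m 1))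
      exact_mod_cast h1
    have hmm : (m : ℝ) * (m : ℝ) * p = (n : ℝ) ^ (2 * ρ + δ - 1) := by
      rw [hmρ, hp, ← Real.rpow_add hnR0, ← Real.rpow_add hnR0]
      congr 1
      ring
    calc (C : ℝ) * p ≤ (m : ℝ) * (m : ℝ) * p := mul_le_mul_of_nonneg_right hCle hp0
      _ = (n : ℝ) ^ (2 * ρ + δ - 1) := hmm
      _ ≤ ε := hsmall.le
  have hC2 : 1 - ε ≤ (1 - p) ^ (C - E) := by
    have h1 : (1 - p) ^ C ≤ (1 - p) ^ (C - E) :=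
      pow_le_pow_of_le_one (by linarith) (by linarith) (Nat.sub_le _ _)
    have h2 : 1 - (C : ℝ) * p ≤ (1 - p) ^ C := by
      have := one_add_mul_le_pow (a := -p) (by linarith) C
      calc 1 - (C : ℝ) * p = 1 + (C : ℝ) * (-p) := by ring
        _ ≤ (1 + -p) ^ C := this
        _ = (1 - p) ^ C := by ring_nf
    linarith
  -- assemble
  have hfin : (1 - ε) * (n : ℝ) ^ ((m : ℝ) * ρ) ≤
      ((n / m : ℕ) : ℝ) ^ m * (p ^ E * (1 - p) ^ (C - E)) := by
    calc (1 - ε) * (n : ℝ) ^ ((m : ℝ) * ρ) = (n : ℝ) ^ ((m : ℝ) * ρ) * (1 - ε) := by ring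
      _ ≤ (((n / m : ℕ) : ℝ) ^ m * p ^ E) * ((1 - p) ^ (C - E)) := by
          apply mul_le_mul hA2 hC2 (by linarith)
          positivity
      _ = ((n / m : ℕ) : ℝ) ^ m * (p ^ E * (1 - p) ^ (C - E)) := by ring
  exact le_trans hfin key
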